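/- Let G be a finite simple graph, A ⊆ V(G), and H ⊆ V(G) an odd set of G. Let S = H ∩ A and let S* ⊆ A satisfy: (i) for every vertex v ∉ A, |N(v) ∩ S| and |N(v) ∩ S*| have the same parity; and (ii) for every vertex v ∈ S*, |N(v) ∩ S*| is even if and only if |N(v) ∩ (H \ A)| is odd. Then (H \ A) ∪ S* is an odd set of G. -/

import Mathlib

/-- A set `S` of vertices of `G` is *odd* if every vertex of `S` has an odd number of
neighbors inside `S`. -/
def SimpleGraph.IsOddSet {V : Type*} (G : SimpleGraph V) (S : Set V) : Prop :=
  ∀ v ∈ S, Odd (S ∩ G.neighborSet v).ncard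

/-- Exchange lemma for odd sets: if `H` is an odd set, `S = H ∩ A`, and `S* ⊆ A` has the
same neighborhood modulo 2 as `S` outside `A` and satisfies the parity condition (ii) on
its own vertices, then `(H \ A) ∪ S*` is again an odd set. -/
theorem stmt14 {V : Type*} [Fintype V] (G : SimpleGraph V) (A H : Set V)
    (hH : G.IsOddSet H) (S Sstar : Set V) (hS : S = H ∩ A) (hSsub : Sstar ⊆ A)
    (hi : ∀ v ∉ A,
      (Odd ((G.neighborSet v) ∩ S).ncard ↔ Odd ((G.neighborSet v) ∩ Sstar).ncard))
    (hii : ∀ v ∈ Sstar,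
      (Even ((G.neighborSet v) ∩ Sstar).ncard ↔ Odd ((G.neighborSet v) ∩ (H \ A)).ncard)) :
    G.IsOddSet ((H \ A) ∪ Sstar) := by
  intro v hv
  have hdisj : Disjoint ((H \ A) ∩ G.neighborSet v) (Sstar ∩ G.neighborSet v) :=
    Set.disjoint_left.2 fun x hx hx' => hx.1.2 (hSsub hx'.1)
  have hcard : (((H \ A) ∪ Sstar) ∩ G.neighborSet v).ncard
      = ((H \ A) ∩ G.neighborSet v).ncard + (Sstar ∩ G.neighborSet v).ncard := by
    rw [Set.union_inter_distrib_right,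
      Set.ncard_union_eq hdisj (Set.toFinite _) (Set.toFinite _)]
  by_cases hvS : v ∈ Sstar
  · have h2 := hii v hvS
    rw [Set.inter_comm (G.neighborSet v) Sstar,
      Set.inter_comm (G.neighborSet v) (H \ A)] at h2
    rw [hcard]
    rcases Nat.even_or_odd ((Sstar ∩ G.neighborSet v).ncard) with he | ho
    · rcases h2.1 he with ⟨k, hk⟩
      rcases he with ⟨m, hm⟩
      exact ⟨k + m, by omega⟩
    · have hne : ¬ Even ((Sstar ∩ G.neighborSet v).ncard) := Nat.not_even_iff_odd.mpr ho
      have hno : ¬ Odd (((H \ A) ∩ G.neighborSet v).ncard) := fun h => hne (h2.2 h)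
      rcases Nat.not_odd_iff_even.mp hno with ⟨m, hm⟩
      rcases ho with ⟨k, hk⟩
      exact ⟨m + k, by omega⟩
  · have hvHA : v ∈ H \ A := hv.resolve_right hvS
    have hvA : v ∉ A := hvHA.2
    have hH' := hH v hvHA.1
    have hdisj2 : Disjoint (S ∩ G.neighborSet v) ((H \ A) ∩ G.neighborSet v) := by
      subst hS
      exact Set.disjoint_left.2 fun x hx hx' => hx'.1.2 hx.1.2
    have hHsplit : H ∩ G.neighborSet v
        = (S ∩ G.neighborSet v) ∪ ((H \ A) ∩ G.neighborSet v) := by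
      subst hS; ext x
      simp only [Set.mem_inter_iff, Set.mem_union, Set.mem_diff]
      tauto
    have hc2 : (H ∩ G.neighborSet v).ncard
        = (S ∩ G.neighborSet v).ncard + ((H \ A) ∩ G.neighborSet v).ncard := by
      rw [hHsplit, Set.ncard_union_eq hdisj2 (Set.toFinite _) (Set.toFinite _)]
    have hi' := hi v hvA
    rw [Set.inter_comm (G.neighborSet v) S, Set.inter_comm (G.neighborSet v) Sstar] at hi'
    rw [hcard]
    rw [hc2] at hH'
    rcases Nat.even_or_odd ((S ∩ G.neighborSet v).ncard) with he | ho
    · have hso : ¬ Odd ((Sstar ∩ G.neighborSet v).ncard) := fun h =>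
        (Nat.not_even_iff_odd.mpr (hi'.2 h)) he
      rcases Nat.not_odd_iff_even.mp hso with ⟨m, hm⟩
      rcases he with ⟨a, ha⟩
      rcases hH' with ⟨k, hk⟩
      exact ⟨k - a + m, by omega⟩
    · rcases hi'.1 ho with ⟨m, hm⟩
      rcases ho with ⟨a, ha⟩
      rcases hH' with ⟨k, hk⟩
      exact ⟨k - a + m, by omega⟩
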